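/- Let p be an odd prime, ζ a primitive p-th root of unity, and φ(z) = (z − 1)^p + 2 − ζ ∈ ℤ[ζ][z]. Then for every n ≥ 1, N_{ℚ(ζ)/ℚ}(φ^n(1)) ≡ 2^p − 1 (mod p²), where φ^n denotes the n-th iterate of φ. -/

import Mathlib

open NumberField Polynomial Finset Module

private lemma one_add_pow_aux {R : Type*} [CommRing R] (t : R) (n : ℕ) :
    ∃ e, (1 + t) ^ n = 1 + n * t + t ^ 2 * e := by
  induction n with
  | zero => exact ⟨0, by push_cast; ring⟩
  | succ n ih =>
    obtain ⟨e, he⟩ := ih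
    exact ⟨e + n + t * e, by rw [pow_succ, he]; push_cast; ring⟩

private lemma prod_sub_mem_aux {R : Type*} [CommRing R] (J : Ideal R) {ι : Type*} (s : Finset ι)
    (f g : ι → R) (h : ∀ i ∈ s, f i - g i ∈ J) : (∏ i ∈ s, f i) - ∏ i ∈ s, g i ∈ J := by
  rw [← Ideal.Quotient.eq, map_prod, map_prod]
  exact Finset.prod_congr rfl fun i hi => Ideal.Quotient.eq.mpr (h i hi)

private lemma norm_two_sub_zeta_aux (p : ℕ+) (hp : Fact (p : ℕ).Prime) (h2 : 2 < (p : ℕ))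
    (K : Type*) [Field K] [Algebra ℚ K] [IsCyclotomicExtension {(p : ℕ)} ℚ K]
    {ζ : K} (hζ : IsPrimitiveRoot ζ (p : ℕ)) :
    Algebra.norm ℚ (2 - ζ) = 2 ^ (p : ℕ) - 1 := by
  haveI := IsCyclotomicExtension.neZero' (p : ℕ) ℚ K
  haveI := IsCyclotomicExtension.finiteDimensional {(p : ℕ)} ℚ K
  haveI := IsCyclotomicExtension.isGalois {(p : ℕ)} ℚ K
  have hirr : Irreducible (cyclotomic p ℚ) := cyclotomic.irreducible_rat p.pos
  let E := AlgebraicClosure K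
  obtain ⟨z, hz⟩ := IsAlgClosed.exists_root (cyclotomic p E)
    (degree_cyclotomic_pos p E p.pos).ne.symm
  apply (algebraMap ℚ E).injective
  rw [Algebra.norm_eq_prod_embeddings]
  have Hprod : (∏ σ : K →ₐ[ℚ] E, σ (2 - ζ)) = eval 2 (cyclotomic' p E) := by
    rw [cyclotomic', eval_prod, ← Finset.prod_attach (primitiveRoots p E), ← univ_eq_attach]
    refine Fintype.prod_equiv (hζ.embeddingsEquivPrimitiveRoots E hirr) _ _ fun σ => ?_
    simp [map_ofNat]
  haveI : NeZero ((p : ℕ) : E) := NeZero.of_faithfulSMul ℚ _ (p : ℕ)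
  have heval : (eval 2 (cyclotomic p ℤ) : ℤ) = 2 ^ (p : ℕ) - 1 := by
    have hg := geom_sum_mul (2 : ℤ) (p : ℕ)
    rw [cyclotomic_prime ℤ p]
    simp only [eval_finset_sum, eval_pow, eval_X]
    linarith [hg]
  rw [Hprod, cyclotomic', ← cyclotomic_eq_prod_X_sub_primitiveRoots (isRoot_cyclotomic_iff.1 hz),
    ← map_cyclotomic_int]
  have hev : eval (2 : E) (map (Int.castRingHom E) (cyclotomic (p : ℕ) ℤ))
      = ((eval 2 (cyclotomic (p : ℕ) ℤ) : ℤ) : E) := by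
    rw [show (2 : E) = ((2 : ℤ) : E) from by push_cast; ring, eval_intCast_map]
    norm_num
  rw [hev, heval]
  push_cast
  norm_num

theorem norm_iterate_congr (p : ℕ+) (hp : Fact (p : ℕ).Prime) (hodd : Odd (p : ℕ))
    (K : Type*) [Field K] [Algebra ℚ K] [IsCyclotomicExtension {(p : ℕ)} ℚ K]
    (ζ : 𝓞 K) (hζ : IsPrimitiveRoot ζ (p : ℕ))
    (φ : 𝓞 K → 𝓞 K) (hφ : ∀ z, φ z = (z - 1) ^ (p : ℕ) + 2 - ζ) :
    ∀ n : ℕ, 1 ≤ n →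
      (Algebra.norm ℤ (φ^[n] 1)) ≡ 2 ^ (p : ℕ) - 1 [ZMOD ((p : ℤ) ^ 2)] := by
  have hpp := hp.out
  have hppos : 0 < (p : ℕ) := hpp.pos
  have hp2 : 2 < (p : ℕ) := hpp.two_le.lt_of_ne (fun h => by
    rw [← h] at hodd
    exact (Nat.not_odd_iff_even.mpr even_two) hodd)
  haveI : CharZero K := charZero_of_injective_algebraMap (algebraMap ℚ K).injective
  haveI hc2 : @IsCyclotomicExtension {(p : ℕ)} ℚ K _ _ DivisionRing.toRatAlgebra := by
    have halg : ‹Algebra ℚ K› = DivisionRing.toRatAlgebra := Subsingleton.elim _ _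
    exact halg ▸ ‹IsCyclotomicExtension {(p : ℕ)} ℚ K›
  haveI : NumberField K := IsCyclotomicExtension.numberField {(p : ℕ)} ℚ K
  haveI : IsGalois ℚ K := IsCyclotomicExtension.isGalois {(p : ℕ)} ℚ K
  haveI : NeZero (p : ℕ) := ⟨hppos.ne'⟩
  -- finrank
  have hfin : finrank ℤ (𝓞 K) = (p : ℕ) - 1 := by
    have h3' := IsCyclotomicExtension.finrank (n := p) K (cyclotomic.irreducible_rat p.pos)
    rw [Nat.totient_prime hpp] at h3'
    rw [RingOfIntegers.rank]
    convert h3' using 2 <;> congr! <;> exact Subsingleton.elim _ _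
  have hevenrank : Even ((p : ℕ) - 1) := Nat.Odd.sub_odd hodd odd_one
  -- Step 1 : p ∣ (1 - ζ)^(p-1)
  have hdvdp : ∃ w : 𝓞 K, (1 - ζ) ^ ((p : ℕ) - 1) = ((p : ℕ) : 𝓞 K) * w := by
    have hζ' : IsPrimitiveRoot ζ (((p : ℕ) - 1) + 1) := by
      rwa [Nat.sub_add_cancel hppos]
    have hprod := hζ'.prod_one_sub_pow_eq_order
    have hdvd' : ∀ k ∈ range ((p : ℕ) - 1), (1 - ζ ^ (k + 1)) ∣ (1 - ζ) := by
      intro k hk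
      have hklt : k + 1 < (p : ℕ) := by have := mem_range.mp hk; omega
      have hcop : Nat.Coprime (k + 1) (p : ℕ) :=
        Nat.Coprime.symm ((Nat.Prime.coprime_iff_not_dvd hpp).mpr
          (fun hdd => by have := Nat.le_of_dvd (Nat.succ_pos k) hdd; omega))
      obtain ⟨m, -, hm⟩ := Nat.exists_mul_mod_eq_one_of_coprime hcop hpp.one_lt
      have hzm : (ζ ^ (k + 1)) ^ m = ζ := by
        calc (ζ ^ (k + 1)) ^ m = ζ ^ ((k + 1) * m) := by rw [← pow_mul]
          _ = ζ ^ (((k + 1) * m) % orderOf ζ) := (pow_mod_orderOf _ _).symm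
          _ = ζ := by rw [← hζ.eq_orderOf, hm, pow_one]
      have := sub_dvd_pow_sub_pow (1 : 𝓞 K) (ζ ^ (k + 1)) m
      rwa [one_pow, hzm] at this
    have hP : ((p : ℕ) : 𝓞 K) = ∏ k ∈ range ((p : ℕ) - 1), (1 - ζ ^ (k + 1)) := by
      rw [hprod]
      exact_mod_cast congrArg (Nat.cast (R := 𝓞 K)) (Nat.sub_add_cancel hppos).symm
    have hpc : (1 - ζ) ^ ((p : ℕ) - 1) = ∏ _k ∈ range ((p : ℕ) - 1), (1 - ζ) := by
      rw [Finset.prod_const, Finset.card_range]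
    have hdd : ((p : ℕ) : 𝓞 K) ∣ (1 - ζ) ^ ((p : ℕ) - 1) := by
      rw [hP, hpc]
      exact Finset.prod_dvd_prod_of_dvd _ _ hdvd'
    exact hdd
  obtain ⟨w, hw⟩ := hdvdp
  -- Step 2 : invariant
  have hinv : ∀ n : ℕ, 1 ≤ n → ∃ c : 𝓞 K,
      φ^[n] 1 = 2 - ζ + ((p : ℕ) : 𝓞 K) * (1 - ζ) * c := by
    intro n hn
    induction n, hn using Nat.le_induction with
    | base =>
      refine ⟨0, ?_⟩
      rw [Function.iterate_one, hφ]
      simp [zero_pow hppos.ne']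
    | succ n hn ih =>
      obtain ⟨c, hc⟩ := ih
      rw [Function.iterate_succ_apply', hc, hφ]
      obtain ⟨e, he⟩ := one_add_pow_aux (((p : ℕ) : 𝓞 K) * c) (p : ℕ)
      have hx1 : (2 - ζ + ((p : ℕ) : 𝓞 K) * (1 - ζ) * c - 1) = (1 - ζ) * (1 + ((p : ℕ) : 𝓞 K) * c) := by
        ring
      refine ⟨w * (1 + ((p : ℕ) : 𝓞 K) * (((p : ℕ) : 𝓞 K) * (c * c * e + c))), ?_⟩
      rw [hx1, mul_pow, he]
      have hps : (p : ℕ) = ((p : ℕ) - 1) + 1 := (Nat.sub_add_cancel hppos).symm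
      calc (1 - ζ) ^ (p : ℕ) * (1 + ↑(p : ℕ) * (((p : ℕ) : 𝓞 K) * c) + (((p : ℕ) : 𝓞 K) * c) ^ 2 * e) + 2 - ζ
          = (1 - ζ) ^ (((p : ℕ) - 1) + 1) * (1 + ↑(p : ℕ) * (((p : ℕ) : 𝓞 K) * c) + (((p : ℕ) : 𝓞 K) * c) ^ 2 * e) + 2 - ζ := by
            rw [← hps]
        _ = ((p : ℕ) : 𝓞 K) * w * (1 - ζ) * (1 + ↑(p : ℕ) * (((p : ℕ) : 𝓞 K) * c) + (((p : ℕ) : 𝓞 K) * c) ^ 2 * e) + 2 - ζ := by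
            rw [pow_succ, hw]
        _ = 2 - ζ + ((p : ℕ) : 𝓞 K) * (1 - ζ) *
            (w * (1 + ((p : ℕ) : 𝓞 K) * (((p : ℕ) : 𝓞 K) * (c * c * e + c)))) := by ring
  -- norm as product over automorphisms
  have hNormProd : ∀ y : 𝓞 K, algebraMap ℤ (𝓞 K) (Algebra.norm ℤ y)
      = ∏ σ : K ≃ₐ[ℚ] K, galRestrict ℤ ℚ K (𝓞 K) σ y := by
    intro y
    rw [prod_galRestrict_eq_norm ℤ ℚ K (𝓞 K) y]
    congr 1
    have h1 : algebraMap ℤ ℚ (IsIntegralClosure.mk' (R := ℤ) ℤ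
        (Algebra.norm ℚ (algebraMap (𝓞 K) K y))
        (Algebra.isIntegral_norm ℚ (IsIntegralClosure.isIntegral ℤ K y).algebraMap))
        = Algebra.norm ℚ (algebraMap (𝓞 K) K y) := IsIntegralClosure.algebraMap_mk' _ _ _
    have h2 : Algebra.norm ℚ (algebraMap (𝓞 K) K y) = algebraMap ℤ ℚ (Algebra.norm ℤ y) :=
      Algebra.norm_localization (R := ℤ) (Rₘ := ℚ) (S := 𝓞 K) (Sₘ := K) (nonZeroDivisors ℤ) y
    exact RingHom.injective_int (algebraMap ℤ ℚ) (by rw [h1, h2])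
  have hnormalg : ∀ m : ℤ, Algebra.norm ℤ (algebraMap ℤ (𝓞 K) m) = m ^ ((p : ℕ) - 1) := by
    intro m
    rw [Algebra.norm_algebraMap_of_basis (Module.Free.chooseBasis ℤ (𝓞 K)),
      ← Module.finrank_eq_card_chooseBasisIndex, hfin]
  have hpne2 : p ≠ 2 := by
    intro h
    subst h
    norm_num at hp2
  have hinj : Function.Injective (algebraMap (𝓞 K) K) := IsFractionRing.injective (𝓞 K) K
  have hζK : IsPrimitiveRoot (algebraMap (𝓞 K) K ζ) (p : ℕ) := hζ.map_of_injective hinj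
  have hti : hζK.toInteger = ζ := rfl
  -- norm of 1 - ζ
  have hnζ1 : Algebra.norm ℤ (1 - ζ) = ((p : ℕ) : ℤ) := by
    have h1 : (1 - ζ : 𝓞 K) = (-1) * (ζ - 1) := by ring
    have hneg : Algebra.norm ℤ (-1 : 𝓞 K) = 1 := by
      have hm1 : (-1 : 𝓞 K) = algebraMap ℤ (𝓞 K) (-1) := by simp
      rw [hm1, hnormalg, hevenrank.neg_one_pow]
    have hmain := hζK.norm_toInteger_sub_one_of_prime_ne_two' (by omega)
    rw [hti] at hmain
    rw [h1, map_mul, hneg, one_mul, hmain]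
  -- key divisibility
  have hkey : ∀ c : 𝓞 K, ((p : ℕ) : ℤ) ^ 2 ∣
      Algebra.norm ℤ (2 - ζ + ((p : ℕ) : 𝓞 K) * (1 - ζ) * c) - Algebra.norm ℤ (2 - ζ) := by
    intro c
    set G := galRestrict ℤ ℚ K (𝓞 K) with hGdef
    set x : 𝓞 K := 2 - ζ + ((p : ℕ) : 𝓞 K) * (1 - ζ) * c with hxdef
    set J : Ideal (𝓞 K) := Ideal.span {((p : ℕ) : 𝓞 K) * (1 - ζ)} with hJdef
    have hmem : algebraMap ℤ (𝓞 K) (Algebra.norm ℤ x - Algebra.norm ℤ (2 - ζ)) ∈ J := by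
      rw [map_sub, hNormProd, hNormProd]
      refine prod_sub_mem_aux J _ _ _ ?_
      intro σ _
      have hζσ : (G σ ζ) ^ (p : ℕ) = 1 := by
        rw [← map_pow, hζ.pow_eq_one, map_one]
      obtain ⟨i, _, hi⟩ := hζ.eq_pow_of_pow_eq_one hζσ
      obtain ⟨s, hs⟩ : (1 - ζ) ∣ (1 - G σ ζ) := by
        rw [← hi]
        simpa using sub_dvd_pow_sub_pow (1 : 𝓞 K) ζ i
      have hσ : G σ x - G σ (2 - ζ) = ((p : ℕ) : 𝓞 K) * (1 - G σ ζ) * (G σ c) := by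
        rw [← map_sub]
        have hdd : x - (2 - ζ) = ((p : ℕ) : 𝓞 K) * (1 - ζ) * c := by rw [hxdef]; ring
        rw [hdd, map_mul, map_mul, map_sub, map_one, map_natCast]
      rw [hσ, hs]
      exact Ideal.mem_span_singleton.mpr ⟨s * G σ c, by ring⟩
    obtain ⟨t, ht⟩ := Ideal.mem_span_singleton.mp hmem
    set d : ℤ := Algebra.norm ℤ x - Algebra.norm ℤ (2 - ζ) with hddef
    have hnx := congrArg (Algebra.norm ℤ) ht
    rw [hnormalg, map_mul, map_mul] at hnx
    have hnp : Algebra.norm ℤ (((p : ℕ) : 𝓞 K)) = ((p : ℕ) : ℤ) ^ ((p : ℕ) - 1) := by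
      rw [show (((p : ℕ) : 𝓞 K)) = algebraMap ℤ (𝓞 K) ((p : ℕ) : ℤ) by push_cast; rfl, hnormalg]
    rw [hnp, hnζ1] at hnx
    have hps : ((p : ℕ) : ℤ) ^ ((p : ℕ) - 1) * ((p : ℕ) : ℤ) = ((p : ℕ) : ℤ) ^ (p : ℕ) := by
      rw [← pow_succ, Nat.sub_add_cancel hppos]
    by_cases hd0 : d = 0
    · rw [hd0]
      exact dvd_zero _
    · have h1 : ((p : ℕ) : ℤ) ^ (p : ℕ) ∣ d ^ ((p : ℕ) - 1) :=
        ⟨Algebra.norm ℤ t, by rw [hnx, ← hps]⟩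
      have h2 : (p : ℕ) ^ (p : ℕ) ∣ d.natAbs ^ ((p : ℕ) - 1) := by
        have := Int.natAbs_dvd_natAbs.mpr h1
        simpa [Int.natAbs_pow] using this
      have hdn : d.natAbs ≠ 0 := Int.natAbs_ne_zero.mpr hd0
      have h3 : (p : ℕ) ≤ (d.natAbs ^ ((p : ℕ) - 1)).factorization (p : ℕ) :=
        (Nat.Prime.pow_dvd_iff_le_factorization hpp (pow_ne_zero _ hdn)).mp h2
      rw [Nat.factorization_pow, Finsupp.smul_apply, smul_eq_mul] at h3
      have h4 : 2 ≤ d.natAbs.factorization (p : ℕ) := by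
        by_contra hcon
        push_neg at hcon
        have hv : d.natAbs.factorization (p : ℕ) ≤ 1 := by omega
        have := Nat.mul_le_mul_left ((p : ℕ) - 1) hv
        omega
      have h5 : (p : ℕ) ^ 2 ∣ d.natAbs :=
        (Nat.Prime.pow_dvd_iff_le_factorization hpp hdn).mpr h4
      have h6 : ((p : ℕ) : ℤ) ^ 2 ∣ (d.natAbs : ℤ) := by exact_mod_cast h5
      exact Int.dvd_natAbs.mp h6
  -- norm of 2 - ζ
  have hbase : Algebra.norm ℤ (2 - ζ : 𝓞 K) = 2 ^ (p : ℕ) - 1 := by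
    have h := norm_two_sub_zeta_aux p hp hp2 K hζK
    rw [Algebra.norm_eq_iff ℤ (Sₘ := K) (Rₘ := ℚ) rfl.le]
    rw [map_sub, map_ofNat, h]
    push_cast
    norm_num
  -- conclusion
  intro n hn
  obtain ⟨c, hc⟩ := hinv n hn
  rw [hc]
  have hk := hkey c
  rw [hbase] at hk
  have hk2 : ((p : ℕ) : ℤ) ^ 2 ∣
      (2 ^ (p : ℕ) - 1) - Algebra.norm ℤ (2 - ζ + ((p : ℕ) : 𝓞 K) * (1 - ζ) * c) := by
    have := dvd_neg.mpr hk
    rwa [neg_sub] at this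
  have hcast : ((p : ℤ)) ^ 2 = ((p : ℕ) : ℤ) ^ 2 := by norm_cast
  rw [hcast]
  exact (Int.modEq_iff_dvd.mpr hk2).symm |>.symm
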